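/- Let G be a finite nilpotent group, p a prime, and Γ a set of generators of G (Subgroup.closure Γ = ⊤). For g ∈ G, write orderOf g = p^{a_g} * m_g where p does not divide m_g. Then the subgroup of G generated by { g ^ m_g : g ∈ Γ } equals the (unique) Sylow p-subgroup of G, i.e., for any Sylow p-subgroup P of G, Subgroup.closure { g ^ m_g : g ∈ Γ } = P. -/

import Mathlib

open Subgroup Pointwise

/-- Bezout splitting of an element according to a coprime factorization. -/
theorem aux_split_pow {G : Type*} [Group G] (g : G) (A B : ℕ) (hco : Nat.Coprime A B) :
    ∃ h k : G, g = h * k ∧ h ∈ Subgroup.zpowers (g ^ B) ∧ k ∈ Subgroup.zpowers (g ^ A) := by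
  have e := Nat.gcd_eq_gcd_ab A B
  rw [hco] at e
  refine ⟨(g ^ B) ^ Nat.gcdB A B, (g ^ A) ^ Nat.gcdA A B, ?_,
    Subgroup.zpow_mem _ (Subgroup.mem_zpowers _) _, Subgroup.zpow_mem _ (Subgroup.mem_zpowers _) _⟩
  rw [← zpow_natCast g B, ← zpow_natCast g A, ← zpow_mul, ← zpow_mul, ← zpow_add,
    add_comm, ← e]
  norm_num

theorem aux_orderOf_pow_left {G : Type*} [Group G] [Finite G] (g : G) (A B : ℕ)
    (hn : orderOf g = A * B) (hB : B ≠ 0) : orderOf (g ^ B) = A := by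
  rw [orderOf_pow, hn, Nat.gcd_comm, Nat.gcd_eq_left (Dvd.intro_left A rfl),
    Nat.mul_div_cancel _ (Nat.pos_of_ne_zero hB)]

theorem aux_orderOf_pow_right {G : Type*} [Group G] [Finite G] (g : G) (A B : ℕ)
    (hn : orderOf g = A * B) (hA : A ≠ 0) : orderOf (g ^ A) = B := by
  rw [orderOf_pow, hn, Nat.gcd_comm, Nat.gcd_eq_left (Dvd.intro B rfl),
    Nat.mul_div_cancel_left _ (Nat.pos_of_ne_zero hA)]

/-- An element of `p`-power order lies in the normal Sylow `p`-subgroup. -/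
theorem aux_mem_sylow_of_orderOf_dvd {G : Type*} [Group G] [Finite G] (p : ℕ) [Fact p.Prime]
    (P : Sylow p G) (hP : (P : Subgroup G).Normal) {x : G} {n : ℕ}
    (hx : orderOf x ∣ p ^ n) : x ∈ P := by
  have hpg : IsPGroup p (Subgroup.zpowers x) := by
    obtain ⟨k, _, hk⟩ := (Nat.dvd_prime_pow (Fact.out : p.Prime)).mp hx
    exact IsPGroup.of_card (by rw [Nat.card_zpowers, hk])
  obtain ⟨Q, hQ⟩ := hpg.exists_le_sylow
  haveI := Sylow.unique_of_normal P hP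
  rw [Subsingleton.elim Q P] at hQ
  exact hQ (Subgroup.mem_zpowers x)

/-- The join of all Sylow `q`-subgroups. -/
noncomputable def sylowSup (G : Type*) [Group G] (q : ℕ) : Subgroup G :=
  ⨆ Q : Sylow q G, (Q : Subgroup G)

theorem sylowSup_eq {G : Type*} [Group G] (q : ℕ) [Subsingleton (Sylow q G)] (Q : Sylow q G) :
    sylowSup G q = (Q : Subgroup G) :=
  le_antisymm (iSup_le fun Q' => by rw [Subsingleton.elim Q' Q]) (le_iSup _ Q)

theorem sylowSup_eq_bot {G : Type*} [Group G] [Finite G] (q : ℕ) [Fact q.Prime]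
    (h : ¬ q ∣ Nat.card G) : sylowSup G q = ⊥ := by
  rw [eq_bot_iff]
  apply iSup_le
  intro Q
  have hc : Nat.card Q = 1 := by
    rw [Sylow.card_eq_multiplicity, Nat.factorization_eq_zero_of_not_dvd h, pow_zero]
  rw [Subgroup.card_eq_one.mp hc]

/-- In a finite group all of whose Sylow subgroups are normal, every element of order
prime to `p` lies in the join of the Sylow `q`-subgroups for primes `q ≠ p`. -/
theorem aux_mem_pPrimeJoin {G : Type*} [Group G] [Finite G]
    (hnorm : ∀ (q : ℕ) (_ : Fact q.Prime) (Q : Sylow q G), (Q : Subgroup G).Normal)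
    (p : ℕ) :
    ∀ (n : ℕ) (x : G), orderOf x = n → ¬ p ∣ n →
      x ∈ ⨆ q : {q : ℕ // q.Prime ∧ q ≠ p}, sylowSup G q.1 := by
  intro n
  induction n using Nat.strong_induction_on with
  | _ n ih =>
    intro x hx hpn
    rcases eq_or_ne n 1 with h1 | h1
    · have : x = 1 := orderOf_eq_one_iff.mp (hx.trans h1)
      rw [this]; exact Subgroup.one_mem _
    · have hn0 : n ≠ 0 := by rw [← hx]; exact (orderOf_pos x).ne'
      obtain ⟨q, hq, hqd⟩ := Nat.exists_prime_and_dvd h1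
      haveI hqf : Fact q.Prime := ⟨hq⟩
      have hqp : q ≠ p := fun h => hpn (h ▸ hqd)
      set A := q ^ n.factorization q with hA
      set B := n / A with hB
      have hAB : A * B = n := Nat.ordProj_mul_ordCompl_eq_self n q
      have hco : Nat.Coprime A B :=
        Nat.Coprime.pow_left _ (Nat.coprime_ordCompl hq hn0)
      have hA0 : A ≠ 0 := pow_ne_zero _ hq.pos.ne'
      have hB0 : B ≠ 0 := by
        intro h; rw [h, mul_zero] at hAB; exact hn0 hAB.symm
      obtain ⟨h, k, hhk, hh, hk⟩ := aux_split_pow x A B hco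
      have hhx : orderOf (x ^ B) = A := aux_orderOf_pow_left x A B (hx.trans hAB.symm) hB0
      -- h has q-power order, so lies in the Sylow q-subgroup
      have hhmem : h ∈ ⨆ q : {q : ℕ // q.Prime ∧ q ≠ p}, sylowSup G q.1 := by
        obtain ⟨Q⟩ := (inferInstance : Nonempty (Sylow q G))
        have : h ∈ Q := by
          apply aux_mem_sylow_of_orderOf_dvd q Q (hnorm q hqf Q) (n := n.factorization q)
          have hd := orderOf_dvd_of_mem_zpowers hh
          rwa [hhx] at hd
        exact le_iSup (fun q : {q : ℕ // q.Prime ∧ q ≠ p} => sylowSup G q.1) ⟨q, hq, hqp⟩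
          (le_iSup (fun Q : Sylow q G => (Q : Subgroup G)) Q this)
      -- k has order dividing B < n, prime to p
      have hkord : orderOf k ∣ B := by
        have : orderOf (x ^ A) = B := aux_orderOf_pow_right x A B (hx.trans hAB.symm) hA0
        rw [← this]
        exact orderOf_dvd_of_mem_zpowers hk
      have hkmem := ih (orderOf k) ?_ k rfl ?_
      · rw [hhk]; exact Subgroup.mul_mem _ hhmem hkmem
      · calc orderOf k ≤ B := Nat.le_of_dvd (Nat.pos_of_ne_zero hB0) hkord
          _ < n := by
            rw [← hAB]
            have : 1 < A := by
              have := Nat.Prime.factorization_pos_of_dvd hq hn0 hqd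
              calc 1 < q := hq.one_lt
                _ ≤ A := Nat.le_self_pow this.ne' q
            calc B = 1 * B := (one_mul B).symm
              _ < A * B := (Nat.mul_lt_mul_right (Nat.pos_of_ne_zero hB0)).mpr this
      · intro hdvd
        exact hpn (hdvd.trans (hkord.trans ⟨A, (mul_comm A B ▸ hAB).symm⟩))

theorem closure_pPrimeParts_eq_sylow (G : Type*) [Group G] [Finite G]
    [Group.IsNilpotent G] (p : ℕ) (hp : p.Prime)
    (Γ : Set G) (hΓ : Subgroup.closure Γ = ⊤)
    (a m : G → ℕ)
    (ham : ∀ g : G, orderOf g = p ^ a g * m g)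
    (hm : ∀ g : G, ¬ p ∣ m g)
    (P : Sylow p G) :
    Subgroup.closure ((fun g => g ^ m g) '' Γ) = (P : Subgroup G) := by
  haveI hpf : Fact p.Prime := ⟨hp⟩
  have hnorm : ∀ (q : ℕ) (_ : Fact q.Prime) (Q : Sylow q G), (Q : Subgroup G).Normal := by
    have h := (isNilpotent_of_finite_tfae (G := G)).out 0 3
    intro q hq Q
    exact h.mp inferInstance q hq Q
  have hm0 : ∀ g : G, m g ≠ 0 := by
    intro g h
    have := ham g
    rw [h, mul_zero] at this
    exact (orderOf_pos g).ne' this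
  -- each generator power lies in P
  have horder : ∀ g : G, orderOf (g ^ m g) = p ^ a g := fun g =>
    aux_orderOf_pow_left g _ _ (ham g) (hm0 g)
  have hgen_mem : ∀ g : G, g ^ m g ∈ P := fun g =>
    aux_mem_sylow_of_orderOf_dvd p P (hnorm p hpf P) (horder g).dvd
  set H := Subgroup.closure ((fun g => g ^ m g) '' Γ) with hH
  have hHP : H ≤ P := by
    rw [hH, Subgroup.closure_le]
    rintro _ ⟨g, _, rfl⟩
    exact hgen_mem g
  -- the p'-join
  set K : Subgroup G := ⨆ q : {q : ℕ // q.Prime ∧ q ≠ p}, sylowSup G q.1 with hK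
  have hKnormal : K.Normal := by
    apply Subgroup.Normal.of_conjugate_fixed
    intro g
    rw [hK]
    rw [Subgroup.pointwise_smul_def]
    erw [Subgroup.map_iSup]
    apply iSup_congr
    rintro ⟨q, hq, hqp⟩
    haveI : Fact q.Prime := ⟨hq⟩
    rw [← Subgroup.pointwise_smul_def]
    rw [show sylowSup G q = sylowSup G q from rfl]
    by_cases hdvd : q ∣ Nat.card G
    · haveI := Sylow.unique_of_normal (Nonempty.some inferInstance)
        (hnorm q ‹_› (Nonempty.some inferInstance))
      rw [sylowSup_eq q (Nonempty.some inferInstance)]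
      haveI := hnorm q ‹_› (Nonempty.some inferInstance)
      exact Subgroup.Normal.conj_smul_eq_self g _
    · rw [sylowSup_eq_bot q hdvd]
      simp
  -- Γ ⊆ H ⊔ K
  have hΓsub : Γ ⊆ ↑(H ⊔ K) := by
    intro g hg
    have hco : Nat.Coprime (p ^ a g) (m g) :=
      Nat.Coprime.pow_left _ ((Nat.Prime.coprime_iff_not_dvd hp).mpr (hm g))
    obtain ⟨h, k, hhk, hh, hk⟩ := aux_split_pow g (p ^ a g) (m g) hco
    have hhH : h ∈ H := by
      have : g ^ m g ∈ H := Subgroup.subset_closure ⟨g, hg, rfl⟩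
      exact (Subgroup.zpowers_le.mpr this) hh
    have hkK : k ∈ K := by
      have hkord : orderOf k ∣ m g := by
        have : orderOf (g ^ p ^ a g) = m g :=
          aux_orderOf_pow_right g _ _ (ham g) (pow_ne_zero _ hp.pos.ne')
        rw [← this]
        exact orderOf_dvd_of_mem_zpowers hk
      exact aux_mem_pPrimeJoin hnorm p (orderOf k) k rfl
        (fun hdvd => hm g (hdvd.trans hkord))
    rw [hhk]
    exact Subgroup.mul_mem _ (Subgroup.mem_sup_left hhH) (Subgroup.mem_sup_right hkK)
  have hHK : H ⊔ K = ⊤ := by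
    rw [eq_top_iff, ← hΓ, Subgroup.closure_le]
    exact hΓsub
  -- Disjointness of P and K
  have hdisj : Disjoint (P : Subgroup G) K := by
    by_cases hpd : p ∣ Nat.card G
    · set ι := {x // x ∈ (Nat.card G).primeFactors} with hι
      set F : ι → Subgroup G := fun q => sylowSup G q.1 with hF
      have hfact : ∀ i : ι, Fact (i.1.Prime) := fun i => ⟨Nat.prime_of_mem_primeFactors i.2⟩
      have hFsyl : ∀ i : ι, ∃ Q : Sylow i.1 G, F i = ↑Q := by
        intro i
        haveI := hfact i
        obtain ⟨Q⟩ := (inferInstance : Nonempty (Sylow i.1 G))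
        haveI := Sylow.unique_of_normal Q (hnorm i.1 ‹_› Q)
        exact ⟨Q, sylowSup_eq i.1 Q⟩
      have hcomm : Pairwise fun i j : ι => ∀ x y : G, x ∈ F i → y ∈ F j → Commute x y := by
        intro i j hne
        haveI := hfact i; haveI := hfact j
        obtain ⟨Qi, hQi⟩ := hFsyl i
        obtain ⟨Qj, hQj⟩ := hFsyl j
        rw [hQi, hQj]
        have hne' : i.1 ≠ j.1 := fun h => hne (Subtype.ext h)
        apply Subgroup.commute_of_normal_of_disjoint _ _ (hnorm i.1 ‹_› Qi) (hnorm j.1 ‹_› Qj)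
        exact IsPGroup.disjoint_of_ne i.1 j.1 hne' _ _ Qi.isPGroup' Qj.isPGroup'
      haveI : ∀ i : ι, Fintype (F i) := fun i => Fintype.ofFinite _
      have hind : iSupIndep F := by
        apply Subgroup.independent_of_coprime_order hcomm
        intro i j hne
        haveI := hfact i; haveI := hfact j
        obtain ⟨Qi, hQi⟩ := hFsyl i
        obtain ⟨Qj, hQj⟩ := hFsyl j
        have hne' : i.1 ≠ j.1 := fun h => hne (Subtype.ext h)
        simp only [← Nat.card_eq_fintype_card, hQi, hQj]
        exact IsPGroup.coprime_card_of_ne i.1 j.1 hne' _ _ Qi.isPGroup' Qj.isPGroup'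
      have hpmem : p ∈ (Nat.card G).primeFactors :=
        Nat.mem_primeFactors.mpr ⟨hp, hpd, Nat.card_pos.ne'⟩
      have hdis := hind ⟨p, hpmem⟩
      have hFP : F ⟨p, hpmem⟩ = (P : Subgroup G) := by
        haveI := Sylow.unique_of_normal P (hnorm p hpf P)
        exact sylowSup_eq p P
      have hKle : K ≤ ⨆ j ≠ (⟨p, hpmem⟩ : ι), F j := by
        rw [hK]
        apply iSup_le
        rintro ⟨q, hq, hqp⟩
        haveI : Fact q.Prime := ⟨hq⟩
        by_cases hqd : q ∣ Nat.card G
        · have hqmem : q ∈ (Nat.card G).primeFactors :=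
            Nat.mem_primeFactors.mpr ⟨hq, hqd, Nat.card_pos.ne'⟩
          have : (⟨q, hqmem⟩ : ι) ≠ ⟨p, hpmem⟩ := fun h => hqp (congrArg Subtype.val h)
          exact le_iSup₂ (f := fun j _ => F j) (⟨q, hqmem⟩ : ι) this
        · rw [sylowSup_eq_bot q hqd]
          exact bot_le
      rw [← hFP]
      exact hdis.mono_right hKle
    · -- p does not divide |G| : P = ⊥
      have : (P : Subgroup G) = ⊥ := by
        have hc : Nat.card P = 1 := by
          rw [Sylow.card_eq_multiplicity, Nat.factorization_eq_zero_of_not_dvd hpd, pow_zero]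
        exact Subgroup.card_eq_one.mp hc
      rw [this]
      exact disjoint_bot_left
  -- conclude
  apply le_antisymm hHP
  intro x hx
  haveI := hKnormal
  have hxtop : x ∈ (↑(H ⊔ K) : Set G) := by
    rw [hHK]; trivial
  rw [Subgroup.mul_normal H K] at hxtop
  obtain ⟨h, hh, k, hk, rfl⟩ := hxtop
  have hkP : k ∈ (P : Subgroup G) := by
    have : h ∈ (P : Subgroup G) := hHP hh
    have := (Subgroup.mul_mem_cancel_left _ this).mp hx
    exact this
  have : k = 1 := by
    have := hdisj.le_bot ⟨hkP, hk⟩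
    simpa using this
  rw [this]
  simpa using hh
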